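/- Let b > 0 and 0 = d_0 < d_1 < ... < d_k = b, and let h : [0,b] -> R/Z be a function that is continuous and monotonically increasing (i.e. admits continuous nondecreasing local lifts to R) on each open interval (d_{j-1}, d_j), has one-sided limits at each d_j, and has a jump discontinuity (distinct one-sided limits in R/Z) at each interior point d_1, ..., d_{k-1}. Then there exists a function G : [0,b] -> R, continuous on each open interval (d_{j-1}, d_j), satisfying: (i) G(u) mod 1 = h(u) for all u in [0,b] \ {d_1,...,d_{k-1}}; (ii) G is nondecreasing on [0,b] \ {d_1,...,d_{k-1}}; (iii) at each interior d_j the one-sided limits satisfy G^-(d_j) < G^+(d_j) < G^-(d_j) + 1; (iv) G(0) in [0,1). Moreover G is unique on [0,b] \ {d_1,...,d_{k-1}}. -/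

import Mathlib

open Set Filter Topology

private instance fact_zero_lt_one_real : Fact ((0:ℝ) < 1) := ⟨one_pos⟩

private lemma pi_toIcoMod (a x : ℝ) :
    ((toIcoMod one_pos a x : ℝ) : AddCircle (1:ℝ)) = (x : AddCircle (1:ℝ)) := by
  rw [QuotientAddGroup.eq_iff_sub_mem, toIcoMod_sub_self]
  apply AddSubgroup.zsmul_mem_zmultiples

private lemma pi_equivIco (a : ℝ) (x : AddCircle (1:ℝ)) :
    (((AddCircle.equivIco 1 a x : ℝ)) : AddCircle (1:ℝ)) = x :=
  (AddCircle.equivIco 1 a).symm_apply_apply x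

private lemma equivIco_coe (a x : ℝ) :
    ((AddCircle.equivIco 1 a (x : AddCircle (1:ℝ))) : ℝ) = toIcoMod one_pos a x := by
  rfl

private lemma int_ne_half (n : ℤ) : (n : ℝ) ≠ 2⁻¹ := by
  intro hn
  have h2 : ((2 * n : ℤ) : ℝ) = ((1 : ℤ) : ℝ) := by push_cast; linarith
  have := Int.cast_injective h2
  omega

private lemma constant_of_int_valued {s : Set ℝ} (hs : IsPreconnected s) {f : ℝ → ℝ}
    (hf : ContinuousOn f s) (hint : ∀ x ∈ s, ((f x : ℝ) : AddCircle (1:ℝ)) = 0) :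
    ∀ x ∈ s, ∀ y ∈ s, f x = f y := by
  have key : ∀ x ∈ s, ∀ y ∈ s, f x < f y → False := by
    intro x hx y hy hlt
    have him : IsPreconnected (f '' s) := hs.image f hf
    have hord := him.ordConnected
    obtain ⟨nx, hnx⟩ := (AddCircle.coe_eq_zero_iff 1).mp (hint x hx)
    obtain ⟨ny, hny⟩ := (AddCircle.coe_eq_zero_iff 1).mp (hint y hy)
    simp only [zsmul_eq_mul, mul_one] at hnx hny
    have hxy : nx < ny := by
      have : (nx : ℝ) < (ny : ℝ) := by rw [hnx, hny]; exact hlt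
      exact_mod_cast this
    have hmem : (nx : ℝ) + 2⁻¹ ∈ Icc (f x) (f y) := by
      constructor
      · rw [← hnx]; norm_num
      · rw [← hny]
        have : (nx : ℝ) + 1 ≤ ny := by exact_mod_cast hxy
        linarith
    obtain ⟨w, hw, hfw⟩ := hord.out (mem_image_of_mem f hx) (mem_image_of_mem f hy) hmem
    obtain ⟨m, hm⟩ := (AddCircle.coe_eq_zero_iff 1).mp (hint w hw)
    simp only [zsmul_eq_mul, mul_one] at hm
    rw [hfw] at hm
    exact int_ne_half (m - nx) (by push_cast; linarith)
  intro x hx y hy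
  rcases lt_trichotomy (f x) (f y) with h | h | h
  · exact absurd h (fun h => key x hx y hy h)
  · exact h
  · exact absurd h (fun h => key y hy x hx h)

private lemma q_base_eq (base : ℝ) :
    ((AddCircle.equivIco 1 base ((base : ℝ) : AddCircle (1:ℝ))) : ℝ) = base := by
  rw [equivIco_coe]
  exact (toIcoMod_eq_self one_pos).mpr ⟨le_refl _, by linarith⟩

private lemma bounded_near_right {a c : ℝ} (hac : a < c) {L : ℝ → ℝ}
    (hLc : ContinuousOn L (Ioo a c)) {ℓ : AddCircle (1:ℝ)}
    (hT : Tendsto (fun u => ((L u : ℝ) : AddCircle (1:ℝ))) (𝓝[>] a) (𝓝 ℓ)) :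
    ∃ a', a < a' ∧ a' < c ∧ ∃ m M : ℝ, ∀ u ∈ Ioo a a', m ≤ L u ∧ L u ≤ M := by
  obtain ⟨lt, hlt⟩ : ∃ y : ℝ, (y : AddCircle (1:ℝ)) = ℓ :=
    ⟨(AddCircle.equivIco 1 0 ℓ : ℝ), pi_equivIco _ _⟩
  set base := lt - 2⁻¹ with hbase
  have hbase_ne : ℓ ≠ ((base : ℝ) : AddCircle (1:ℝ)) := by
    rw [← hlt]
    intro hcontra
    have h0 : ((lt - base : ℝ) : AddCircle (1:ℝ)) = 0 := by
      rw [AddCircle.coe_sub, hcontra, sub_self]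
    obtain ⟨n, hn⟩ := (AddCircle.coe_eq_zero_iff 1).mp h0
    simp only [zsmul_eq_mul, mul_one] at hn
    exact int_ne_half n (by rw [hn]; ring)
  set q : AddCircle (1:ℝ) → ℝ := fun x => ((AddCircle.equivIco 1 base x : ℝ)) with hq
  have hqval : ∀ x : AddCircle (1:ℝ), ((q x : ℝ) : AddCircle (1:ℝ)) = x := pi_equivIco base
  have hqℓ : q ℓ = lt := by
    rw [hq, ← hlt]
    simp only
    rw [equivIco_coe]
    exact (toIcoMod_eq_self one_pos).mpr ⟨by rw [hbase]; linarith, by rw [hbase]; linarith⟩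
  have hqcont : ContinuousAt q ℓ :=
    continuousAt_subtype_val.comp (AddCircle.continuousAt_equivIco _ _ hbase_ne)
  have h2 : Tendsto (fun u => q ((L u : ℝ) : AddCircle (1:ℝ))) (𝓝[>] a) (𝓝 lt) := by
    rw [← hqℓ]; exact hqcont.tendsto.comp hT
  have h3 : ∀ᶠ u in 𝓝[>] a, |q ((L u : ℝ) : AddCircle (1:ℝ)) - lt| < 4⁻¹ := by
    have := Metric.tendsto_nhds.mp h2 4⁻¹ (by norm_num)
    simpa [Real.dist_eq] using this
  have h4 : Ioo a c ∈ 𝓝[>] a := Ioo_mem_nhdsGT_of_mem ⟨le_refl a, hac⟩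
  have h5 := h3.and (eventually_of_mem h4 (fun x hx => hx))
  rw [eventually_iff, mem_nhdsGT_iff_exists_Ioo_subset] at h5
  obtain ⟨t, hta, ht⟩ := h5
  have htmin : a < min t c := lt_min hta hac
  set a' : ℝ := (a + min t c) / 2 with ha'
  have haa' : a < a' := by rw [ha']; linarith
  have ha'c : a' < c := by
    have : a' < min t c := by rw [ha']; linarith
    exact lt_of_lt_of_le this (min_le_right _ _)
  have ha't : a' ≤ t := by
    have : a' < min t c := by rw [ha']; linarith
    exact le_of_lt (lt_of_lt_of_le this (min_le_left _ _))
  have hP : ∀ u ∈ Ioo a a',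
      |q ((L u : ℝ) : AddCircle (1:ℝ)) - lt| < 4⁻¹ ∧ u ∈ Ioo a c := by
    intro u hu
    exact ht ⟨hu.1, lt_of_lt_of_le hu.2 ha't⟩
  set n : ℝ → ℝ := fun u => L u - q ((L u : ℝ) : AddCircle (1:ℝ)) with hn
  have hncont : ContinuousOn n (Ioo a a') := by
    intro u hu
    obtain ⟨hPu, huc⟩ := hP u hu
    have hLu : ContinuousWithinAt L (Ioo a a') u :=
      (hLc u huc).mono (Ioo_subset_Ioo le_rfl ha'c.le)
    have hne : ((L u : ℝ) : AddCircle (1:ℝ)) ≠ ((base : ℝ) : AddCircle (1:ℝ)) := by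
      intro heq
      have : q ((L u : ℝ) : AddCircle (1:ℝ)) = base := by rw [heq]; exact q_base_eq base
      rw [this, hbase] at hPu
      rw [show lt - 2⁻¹ - lt = -2⁻¹ by ring, abs_neg, abs_of_pos (by norm_num : (0:ℝ) < 2⁻¹)] at hPu
      norm_num at hPu
    have hqa : ContinuousAt (fun y : ℝ => q ((y : ℝ) : AddCircle (1:ℝ))) (L u) :=
      (continuousAt_subtype_val.comp (AddCircle.continuousAt_equivIco _ _ hne)).comp
        (AddCircle.continuous_mk' 1).continuousAt
    exact hLu.sub (hqa.comp_continuousWithinAt hLu)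
  have hnint : ∀ u ∈ Ioo a a', ((n u : ℝ) : AddCircle (1:ℝ)) = 0 := by
    intro u hu
    rw [hn]
    simp only
    rw [AddCircle.coe_sub, hqval, sub_self]
  have hconst := constant_of_int_valued isPreconnected_Ioo hncont hnint
  set u0 : ℝ := (a + a') / 2 with hu0
  have hu0mem : u0 ∈ Ioo a a' := ⟨by rw [hu0]; linarith, by rw [hu0]; linarith⟩
  refine ⟨a', haa', ha'c, n u0 + lt - 4⁻¹, n u0 + lt + 4⁻¹, ?_⟩
  intro u hu
  obtain ⟨hPu, _⟩ := hP u hu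
  have heqn : n u = n u0 := hconst u hu u0 hu0mem
  have : L u = n u + q ((L u : ℝ) : AddCircle (1:ℝ)) := by rw [hn]; ring
  rw [abs_lt] at hPu
  constructor <;> [skip; skip] <;> rw [this, heqn] <;> linarith [hPu.1, hPu.2]

private lemma bounded_near_left {a c : ℝ} (hac : a < c) {L : ℝ → ℝ}
    (hLc : ContinuousOn L (Ioo a c)) {ℓ : AddCircle (1:ℝ)}
    (hT : Tendsto (fun u => ((L u : ℝ) : AddCircle (1:ℝ))) (𝓝[<] c) (𝓝 ℓ)) :
    ∃ c', a < c' ∧ c' < c ∧ ∃ m M : ℝ, ∀ u ∈ Ioo c' c, m ≤ L u ∧ L u ≤ M := by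
  obtain ⟨lt, hlt⟩ : ∃ y : ℝ, (y : AddCircle (1:ℝ)) = ℓ :=
    ⟨(AddCircle.equivIco 1 0 ℓ : ℝ), pi_equivIco _ _⟩
  set base := lt - 2⁻¹ with hbase
  have hbase_ne : ℓ ≠ ((base : ℝ) : AddCircle (1:ℝ)) := by
    rw [← hlt]
    intro hcontra
    have h0 : ((lt - base : ℝ) : AddCircle (1:ℝ)) = 0 := by
      rw [AddCircle.coe_sub, hcontra, sub_self]
    obtain ⟨n, hn⟩ := (AddCircle.coe_eq_zero_iff 1).mp h0
    simp only [zsmul_eq_mul, mul_one] at hn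
    exact int_ne_half n (by rw [hn]; ring)
  set q : AddCircle (1:ℝ) → ℝ := fun x => ((AddCircle.equivIco 1 base x : ℝ)) with hq
  have hqval : ∀ x : AddCircle (1:ℝ), ((q x : ℝ) : AddCircle (1:ℝ)) = x := pi_equivIco base
  have hqℓ : q ℓ = lt := by
    rw [hq, ← hlt]
    simp only
    rw [equivIco_coe]
    exact (toIcoMod_eq_self one_pos).mpr ⟨by rw [hbase]; linarith, by rw [hbase]; linarith⟩
  have hqcont : ContinuousAt q ℓ :=
    continuousAt_subtype_val.comp (AddCircle.continuousAt_equivIco _ _ hbase_ne)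
  have h2 : Tendsto (fun u => q ((L u : ℝ) : AddCircle (1:ℝ))) (𝓝[<] c) (𝓝 lt) := by
    rw [← hqℓ]; exact hqcont.tendsto.comp hT
  have h3 : ∀ᶠ u in 𝓝[<] c, |q ((L u : ℝ) : AddCircle (1:ℝ)) - lt| < 4⁻¹ := by
    have := Metric.tendsto_nhds.mp h2 4⁻¹ (by norm_num)
    simpa [Real.dist_eq] using this
  have h4 : Ioo a c ∈ 𝓝[<] c := Ioo_mem_nhdsLT_of_mem ⟨hac, le_refl c⟩
  have h5 := h3.and (eventually_of_mem h4 (fun x hx => hx))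
  rw [eventually_iff, mem_nhdsLT_iff_exists_Ioo_subset] at h5
  obtain ⟨t, hta, ht⟩ := h5
  have htmax : max t a < c := max_lt hta hac
  set c' : ℝ := (max t a + c) / 2 with hc'
  have hcc' : c' < c := by rw [hc']; linarith
  have hac' : a < c' := by
    have : max t a < c' := by rw [hc']; linarith
    exact lt_of_le_of_lt (le_max_right _ _) this
  have hc't : t ≤ c' := by
    have : max t a < c' := by rw [hc']; linarith
    exact le_of_lt (lt_of_le_of_lt (le_max_left _ _) this)
  have hP : ∀ u ∈ Ioo c' c,
      |q ((L u : ℝ) : AddCircle (1:ℝ)) - lt| < 4⁻¹ ∧ u ∈ Ioo a c := by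
    intro u hu
    exact ht ⟨lt_of_le_of_lt hc't hu.1, hu.2⟩
  set n : ℝ → ℝ := fun u => L u - q ((L u : ℝ) : AddCircle (1:ℝ)) with hn
  have hncont : ContinuousOn n (Ioo c' c) := by
    intro u hu
    obtain ⟨hPu, huc⟩ := hP u hu
    have hLu : ContinuousWithinAt L (Ioo c' c) u :=
      (hLc u huc).mono (Ioo_subset_Ioo hac'.le le_rfl)
    have hne : ((L u : ℝ) : AddCircle (1:ℝ)) ≠ ((base : ℝ) : AddCircle (1:ℝ)) := by
      intro heq
      have : q ((L u : ℝ) : AddCircle (1:ℝ)) = base := by rw [heq]; exact q_base_eq base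
      rw [this, hbase] at hPu
      rw [show lt - 2⁻¹ - lt = -2⁻¹ by ring, abs_neg,
        abs_of_pos (by norm_num : (0:ℝ) < 2⁻¹)] at hPu
      norm_num at hPu
    have hqa : ContinuousAt (fun y : ℝ => q ((y : ℝ) : AddCircle (1:ℝ))) (L u) :=
      (continuousAt_subtype_val.comp (AddCircle.continuousAt_equivIco _ _ hne)).comp
        (AddCircle.continuous_mk' 1).continuousAt
    exact hLu.sub (hqa.comp_continuousWithinAt hLu)
  have hnint : ∀ u ∈ Ioo c' c, ((n u : ℝ) : AddCircle (1:ℝ)) = 0 := by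
    intro u hu
    rw [hn]
    simp only
    rw [AddCircle.coe_sub, hqval, sub_self]
  have hconst := constant_of_int_valued isPreconnected_Ioo hncont hnint
  set u0 : ℝ := (c' + c) / 2 with hu0
  have hu0mem : u0 ∈ Ioo c' c := ⟨by rw [hu0]; linarith, by rw [hu0]; linarith⟩
  refine ⟨c', hac', hcc', n u0 + lt - 4⁻¹, n u0 + lt + 4⁻¹, ?_⟩
  intro u hu
  obtain ⟨hPu, _⟩ := hP u hu
  have heqn : n u = n u0 := hconst u hu u0 hu0mem
  have : L u = n u + q ((L u : ℝ) : AddCircle (1:ℝ)) := by rw [hn]; ring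
  rw [abs_lt] at hPu
  constructor <;> [skip; skip] <;> rw [this, heqn] <;> linarith [hPu.1, hPu.2]

private lemma limit_right {a c : ℝ} (hac : a < c) {L : ℝ → ℝ}
    (hLc : ContinuousOn L (Ioo a c)) (hLm : MonotoneOn L (Ioo a c)) {ℓ : AddCircle (1:ℝ)}
    (hT : Tendsto (fun u => ((L u : ℝ) : AddCircle (1:ℝ))) (𝓝[>] a) (𝓝 ℓ)) :
    ∃ A : ℝ, Tendsto L (𝓝[>] a) (𝓝 A) ∧ ((A : ℝ) : AddCircle (1:ℝ)) = ℓ ∧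
      ∀ u ∈ Ioo a c, A ≤ L u := by
  obtain ⟨a', haa', ha'c, m, M, hbd⟩ := bounded_near_right hac hLc hT
  have hsub : Ioo a a' ⊆ Ioo a c := Ioo_subset_Ioo le_rfl ha'c.le
  have hmono' := hLm.mono hsub
  have hne : (Ioo a a').Nonempty := nonempty_Ioo.mpr haa'
  have hbdd : BddBelow (L '' Ioo a a') := by
    refine ⟨m, ?_⟩
    rintro y ⟨u, hu, rfl⟩
    exact (hbd u hu).1
  have hTen : Tendsto L (𝓝[>] a) (𝓝 (sInf (L '' Ioo a a'))) :=
    MonotoneOn.tendsto_nhdsWithin_Ioo_right hne hmono' hbdd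
  refine ⟨sInf (L '' Ioo a a'), hTen, ?_, ?_⟩
  · have h1 : Tendsto (fun u => ((L u : ℝ) : AddCircle (1:ℝ))) (𝓝[>] a)
        (𝓝 ((sInf (L '' Ioo a a') : ℝ) : AddCircle (1:ℝ))) :=
      ((AddCircle.continuous_mk' 1).tendsto _).comp hTen
    exact tendsto_nhds_unique h1 hT
  · intro u hu
    apply le_of_tendsto hTen
    have hmem : Ioo a (min a' u) ∈ 𝓝[>] a :=
      Ioo_mem_nhdsGT_of_mem ⟨le_rfl, lt_min haa' hu.1⟩
    filter_upwards [hmem] with v hv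
    exact hLm ⟨hv.1, lt_trans (lt_of_lt_of_le hv.2 (min_le_left _ _)) ha'c⟩ hu
      (le_of_lt (lt_of_lt_of_le hv.2 (min_le_right _ _)))

private lemma limit_left {a c : ℝ} (hac : a < c) {L : ℝ → ℝ}
    (hLc : ContinuousOn L (Ioo a c)) (hLm : MonotoneOn L (Ioo a c)) {ℓ : AddCircle (1:ℝ)}
    (hT : Tendsto (fun u => ((L u : ℝ) : AddCircle (1:ℝ))) (𝓝[<] c) (𝓝 ℓ)) :
    ∃ B : ℝ, Tendsto L (𝓝[<] c) (𝓝 B) ∧ ((B : ℝ) : AddCircle (1:ℝ)) = ℓ ∧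
      ∀ u ∈ Ioo a c, L u ≤ B := by
  obtain ⟨c', hac', hc'c, m, M, hbd⟩ := bounded_near_left hac hLc hT
  have hsub : Ioo c' c ⊆ Ioo a c := Ioo_subset_Ioo hac'.le le_rfl
  have hmono' := hLm.mono hsub
  have hne : (Ioo c' c).Nonempty := nonempty_Ioo.mpr hc'c
  have hbdd : BddAbove (L '' Ioo c' c) := by
    refine ⟨M, ?_⟩
    rintro y ⟨u, hu, rfl⟩
    exact (hbd u hu).2
  have hTen : Tendsto L (𝓝[<] c) (𝓝 (sSup (L '' Ioo c' c))) :=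
    MonotoneOn.tendsto_nhdsWithin_Ioo_left hne hmono' hbdd
  refine ⟨sSup (L '' Ioo c' c), hTen, ?_, ?_⟩
  · have h1 : Tendsto (fun u => ((L u : ℝ) : AddCircle (1:ℝ))) (𝓝[<] c)
        (𝓝 ((sSup (L '' Ioo c' c) : ℝ) : AddCircle (1:ℝ))) :=
      ((AddCircle.continuous_mk' 1).tendsto _).comp hTen
    exact tendsto_nhds_unique h1 hT
  · intro u hu
    apply ge_of_tendsto hTen
    have hmem : Ioo (max c' u) c ∈ 𝓝[<] c :=
      Ioo_mem_nhdsLT_of_mem ⟨max_lt hc'c hu.2, le_rfl⟩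
    filter_upwards [hmem] with v hv
    exact hLm hu ⟨lt_trans hac' (lt_of_le_of_lt (le_max_left _ _) hv.1), hv.2⟩
      (le_of_lt (lt_of_le_of_lt (le_max_right _ _) hv.1))




/-- The properties of the monotone lift `Γ h` of a piecewise-continuous, piecewise-monotone
circle-valued function `h` on `[0,b]`, with jump points among `{d 1, …, d (k-1)}`:
continuity on the open pieces, lifting `h` mod 1 off the jump points, monotonicity,
one-sided limits with jump sizes in `(0,1)` at the interior jump points (and jump sizes
`< 1` at the endpoints), and value at `0` in `[0,1)`. -/
def IsGammaLift (b : ℝ) (k : ℕ) (d : ℕ → ℝ) (h : ℝ → AddCircle (1 : ℝ)) (G : ℝ → ℝ) :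
    Prop :=
  (∀ j < k, ContinuousOn G (Ioo (d j) (d (j + 1)))) ∧
  (∀ u ∈ Icc 0 b \ (d '' {j : ℕ | 0 < j ∧ j < k}),
    ((G u : ℝ) : AddCircle (1 : ℝ)) = h u) ∧
  MonotoneOn G (Icc 0 b \ (d '' {j : ℕ | 0 < j ∧ j < k})) ∧
  (∀ j : ℕ, 0 < j → j < k → ∃ Gm Gp : ℝ,
    Tendsto G (nhdsWithin (d j) (Iio (d j))) (nhds Gm) ∧
    Tendsto G (nhdsWithin (d j) (Ioi (d j))) (nhds Gp) ∧
    Gm < Gp ∧ Gp < Gm + 1) ∧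
  (∃ Gp : ℝ, Tendsto G (nhdsWithin 0 (Ioi (0:ℝ))) (nhds Gp) ∧ G 0 ≤ Gp ∧ Gp < G 0 + 1) ∧
  (∃ Gm : ℝ, Tendsto G (nhdsWithin b (Iio b)) (nhds Gm) ∧ Gm ≤ G b ∧ G b < Gm + 1) ∧
  G 0 ∈ Ico (0:ℝ) 1

/- STATEMENT 1: existence and uniqueness (off the jump points) of the monotone lift `Γ h`
   of a circle-valued function `h` on `[0,b]` which is continuous and monotonically
   increasing (in the sense of continuous nondecreasing local lifts) on each interval
   `(d_{j-1}, d_j)`, has one-sided limits at each `d_j`, and jump discontinuities at the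
   interior points `d_1, …, d_{k-1}`. -/
theorem stmt_1 (b : ℝ) (hb : 0 < b) (k : ℕ) (hk : 1 ≤ k)
    (d : ℕ → ℝ) (hd0 : d 0 = 0) (hdk : d k = b)
    (hdmono : ∀ i j : ℕ, i < j → j ≤ k → d i < d j)
    (h : ℝ → AddCircle (1 : ℝ))
    (hlift : ∀ j < k, ∃ L : ℝ → ℝ,
      ContinuousOn L (Ioo (d j) (d (j + 1))) ∧ MonotoneOn L (Ioo (d j) (d (j + 1))) ∧
      ∀ u ∈ Ioo (d j) (d (j + 1)), ((L u : ℝ) : AddCircle (1 : ℝ)) = h u)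
    (hlim : ∀ j ≤ k, ∃ lm lp : AddCircle (1 : ℝ),
      (0 < j → Tendsto h (nhdsWithin (d j) (Iio (d j))) (nhds lm)) ∧
      (j < k → Tendsto h (nhdsWithin (d j) (Ioi (d j))) (nhds lp)) ∧
      (0 < j → j < k → lm ≠ lp)) :
    ∃ G : ℝ → ℝ, IsGammaLift b k d h G ∧
      ∀ G' : ℝ → ℝ, IsGammaLift b k d h G' →
        ∀ u ∈ Icc 0 b \ (d '' {j : ℕ | 0 < j ∧ j < k}), G' u = G u := by
  classical
  -- totalize the choices
  have hlift' : ∀ j : ℕ, ∃ L : ℝ → ℝ,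
      j < k → ContinuousOn L (Ioo (d j) (d (j+1))) ∧ MonotoneOn L (Ioo (d j) (d (j+1))) ∧
        ∀ u ∈ Ioo (d j) (d (j+1)), ((L u : ℝ) : AddCircle (1:ℝ)) = h u := by
    intro j
    by_cases hj : j < k
    · obtain ⟨L, hL⟩ := hlift j hj; exact ⟨L, fun _ => hL⟩
    · exact ⟨fun _ => 0, fun hj' => absurd hj' hj⟩
  choose L hL using hlift'
  have hlim' : ∀ j : ℕ, ∃ lm lp : AddCircle (1:ℝ),
      (0 < j → j ≤ k → Tendsto h (𝓝[<] (d j)) (𝓝 lm)) ∧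
      (j < k → Tendsto h (𝓝[>] (d j)) (𝓝 lp)) ∧
      (0 < j → j < k → lm ≠ lp) := by
    intro j
    by_cases hj : j ≤ k
    · obtain ⟨lm, lp, h1, h2, h3⟩ := hlim j hj
      exact ⟨lm, lp, fun h0 _ => h1 h0, h2, h3⟩
    · exact ⟨0, 0, fun _ hj' => absurd hj' hj, fun hj' => absurd hj'.le hj,
        fun _ hj' => absurd hj'.le hj⟩
  choose lm lp hlm hlp hne using hlim'
  have hdle : ∀ i j : ℕ, i ≤ j → j ≤ k → d i ≤ d j := by
    intro i j hij hjk
    rcases eq_or_lt_of_le hij with rfl | hij'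
    · exact le_rfl
    · exact (hdmono i j hij' hjk).le
  have hII : ∀ j, j < k → d j < d (j+1) :=
    fun j hj => hdmono j (j+1) (Nat.lt_succ_self j) (Nat.succ_le_of_lt hj)
  have hTright : ∀ j, j < k →
      Tendsto (fun u => ((L j u : ℝ) : AddCircle (1:ℝ))) (𝓝[>] (d j)) (𝓝 (lp j)) := by
    intro j hj
    refine (hlp j hj).congr' ?_
    filter_upwards [Ioo_mem_nhdsGT_of_mem ⟨le_rfl, hII j hj⟩] with u hu
    exact ((hL j hj).2.2 u hu).symm
  have hTleft : ∀ j, j < k →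
      Tendsto (fun u => ((L j u : ℝ) : AddCircle (1:ℝ))) (𝓝[<] (d (j+1))) (𝓝 (lm (j+1))) := by
    intro j hj
    refine (hlm (j+1) (Nat.succ_pos j) (Nat.succ_le_of_lt hj)).congr' ?_
    filter_upwards [Ioo_mem_nhdsLT_of_mem ⟨hII j hj, le_rfl⟩] with u hu
    exact ((hL j hj).2.2 u hu).symm
  have hABex : ∀ j : ℕ, ∃ A B : ℝ, j < k →
      (Tendsto (L j) (𝓝[>] (d j)) (𝓝 A) ∧ ((A:ℝ):AddCircle (1:ℝ)) = lp j ∧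
        (∀ u ∈ Ioo (d j) (d (j+1)), A ≤ L j u)) ∧
      (Tendsto (L j) (𝓝[<] (d (j+1))) (𝓝 B) ∧ ((B:ℝ):AddCircle (1:ℝ)) = lm (j+1) ∧
        (∀ u ∈ Ioo (d j) (d (j+1)), L j u ≤ B)) := by
    intro j
    by_cases hj : j < k
    · obtain ⟨A, hA1, hA2, hA3⟩ := limit_right (hII j hj) (hL j hj).1 (hL j hj).2.1
        (hTright j hj)
      obtain ⟨B, hB1, hB2, hB3⟩ := limit_left (hII j hj) (hL j hj).1 (hL j hj).2.1
        (hTleft j hj)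
      exact ⟨A, B, fun _ => ⟨⟨hA1, hA2, hA3⟩, ⟨hB1, hB2, hB3⟩⟩⟩
    · exact ⟨0, 0, fun hj' => absurd hj' hj⟩
  choose A B hAB using hABex
  set G0 : ℝ := ((AddCircle.equivIco 1 0 (h 0)) : ℝ) with hG0def
  have hG0mem : G0 ∈ Ico (0:ℝ) 1 := by
    have h2 := (AddCircle.equivIco 1 0 (h 0)).2
    rw [hG0def]
    exact ⟨h2.1, by linarith [h2.2]⟩
  have hG0coe : ((G0:ℝ) : AddCircle (1:ℝ)) = h 0 := pi_equivIco 0 (h 0)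
  set c : ℕ → ℝ := fun n => Nat.rec (toIcoMod one_pos G0 (A 0) - A 0)
      (fun j cj => toIcoMod one_pos (B j + cj) (A (j+1)) - A (j+1)) n with hcdef
  have hc0 : c 0 = toIcoMod one_pos G0 (A 0) - A 0 := rfl
  have hcs : ∀ j, c (j+1) = toIcoMod one_pos (B j + c j) (A (j+1)) - A (j+1) := fun j => rfl
  have hcπ : ∀ j, ((c j : ℝ) : AddCircle (1:ℝ)) = 0 := by
    intro j
    cases j with
    | zero => rw [hc0, AddCircle.coe_sub, pi_toIcoMod, sub_self]
    | succ j => rw [hcs j, AddCircle.coe_sub, pi_toIcoMod, sub_self]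
  set E : ℕ → ℝ := fun j => A j + c j with hEdef
  set F : ℕ → ℝ := fun j => B j + c j with hFdef
  have hE0 : E 0 ∈ Ico G0 (G0 + 1) := by
    have hmm := toIcoMod_mem_Ico one_pos G0 (A 0)
    have he : E 0 = toIcoMod one_pos G0 (A 0) := by
      rw [hEdef]; simp only; rw [hc0]; ring
    rwa [he]
  have hFE : ∀ j, E (j+1) ∈ Ico (F j) (F j + 1) := by
    intro j
    have hmm := toIcoMod_mem_Ico one_pos (B j + c j) (A (j+1))
    have he : E (j+1) = toIcoMod one_pos (B j + c j) (A (j+1)) := by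
      rw [hEdef]; simp only; rw [hcs j]; ring
    have hf : F j = B j + c j := by rw [hFdef]
    rw [he, hf]; exact hmm
  have hEπ : ∀ j, j < k → ((E j : ℝ):AddCircle (1:ℝ)) = lp j := by
    intro j hj
    rw [hEdef]; simp only
    rw [AddCircle.coe_add, hcπ, add_zero, (hAB j hj).1.2.1]
  have hFπ : ∀ j, j < k → ((F j : ℝ):AddCircle (1:ℝ)) = lm (j+1) := by
    intro j hj
    rw [hFdef]; simp only
    rw [AddCircle.coe_add, hcπ, add_zero, (hAB j hj).2.2.1]
  set rb : ℝ := ((AddCircle.equivIco 1 0 (h b)) : ℝ) with hrbdef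
  have hrbcoe : ((rb:ℝ) : AddCircle (1:ℝ)) = h b := pi_equivIco 0 (h b)
  set Gb : ℝ := toIcoMod one_pos (F (k-1)) rb with hGbdef
  have hGbmem : Gb ∈ Ico (F (k-1)) (F (k-1) + 1) := toIcoMod_mem_Ico one_pos _ _
  have hGbcoe : ((Gb:ℝ) : AddCircle (1:ℝ)) = h b := by
    rw [hGbdef, pi_toIcoMod, hrbcoe]
  set G : ℝ → ℝ := fun u => if u = 0 then G0 else if u = b then Gb else
      if H : ∃ j, j < k ∧ u ∈ Ioo (d j) (d (j+1)) then L H.choose u + c H.choose else 0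
    with hGdef
  have hmemI : ∀ j, j < k → ∀ u ∈ Ioo (d j) (d (j+1)), 0 < u ∧ u < b := by
    intro j hj u hu
    constructor
    · calc (0:ℝ) = d 0 := hd0.symm
        _ ≤ d j := hdle 0 j (Nat.zero_le j) hj.le
        _ < u := hu.1
    · calc u < d (j+1) := hu.2
        _ ≤ d k := hdle (j+1) k (Nat.succ_le_of_lt hj) le_rfl
        _ = b := hdk
  have huniq : ∀ i j : ℕ, i < k → j < k → ∀ u, u ∈ Ioo (d i) (d (i+1)) →
      u ∈ Ioo (d j) (d (j+1)) → i = j := by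
    intro i j hi hj u hui huj
    by_contra hne'
    rcases Nat.lt_or_ge i j with hij | hij
    · have hd' : d (i+1) ≤ d j := hdle (i+1) j hij hj.le
      linarith [hui.2, huj.1]
    · have hji : j < i := lt_of_le_of_ne hij (Ne.symm hne')
      have hd' : d (j+1) ≤ d i := hdle (j+1) i hji hi.le
      linarith [hui.1, huj.2]
  have hGeqI : ∀ j, j < k → ∀ u ∈ Ioo (d j) (d (j+1)), G u = L j u + c j := by
    intro j hj u hu
    obtain ⟨hu0, hub⟩ := hmemI j hj u hu
    rw [hGdef]
    simp only
    rw [if_neg (ne_of_gt hu0), if_neg (ne_of_lt hub), dif_pos ⟨j, hj, hu⟩]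
    have hspec := (⟨j, hj, hu⟩ : ∃ i, i < k ∧ u ∈ Ioo (d i) (d (i+1))).choose_spec
    have heq := huniq _ j hspec.1 hj u hspec.2 hu
    rw [heq]
  have hG0eq : G 0 = G0 := by rw [hGdef]; simp
  have hGbeq : G b = Gb := by
    rw [hGdef]; simp only
    rw [if_neg (ne_of_gt hb)]; simp
  have hcover : ∀ u, u ∈ Icc 0 b \ (d '' {j | 0 < j ∧ j < k}) →
      u = 0 ∨ u = b ∨ ∃ j, j < k ∧ u ∈ Ioo (d j) (d (j+1)) := by
    intro u hu
    by_cases hu0 : u = 0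
    · exact Or.inl hu0
    refine Or.inr ?_
    by_cases hub : u = b
    · exact Or.inl hub
    refine Or.inr ?_
    have h0u : 0 < u := lt_of_le_of_ne hu.1.1 (Ne.symm hu0)
    have hub' : u < b := lt_of_le_of_ne hu.1.2 hub
    set P : ℕ → Prop := fun j => d j < u with hPdef
    have hP0 : P 0 := by rw [hPdef]; simp only; rw [hd0]; exact h0u
    set j := Nat.findGreatest P k with hjdef
    have hPj : P j := Nat.findGreatest_spec (Nat.zero_le k) hP0
    have hjk : j ≤ k := Nat.findGreatest_le k
    have hjlt : j < k := by
      rcases lt_or_eq_of_le hjk with h' | h'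
      · exact h'
      · exfalso
        rw [h'] at hPj
        have : d k < u := hPj
        rw [hdk] at this
        linarith
    have hnot : ¬ P (j+1) :=
      Nat.findGreatest_is_greatest (Nat.lt_succ_self j) (Nat.succ_le_of_lt hjlt)
    have hle : u ≤ d (j+1) := not_lt.mp hnot
    have hne2 : u ≠ d (j+1) := by
      rcases Nat.lt_or_ge (j+1) k with hk' | hk'
      · intro heq
        exact hu.2 ⟨j+1, ⟨Nat.succ_pos j, hk'⟩, heq.symm⟩
      · have hjk1 : j + 1 = k := le_antisymm (Nat.succ_le_of_lt hjlt) hk'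
        rw [hjk1, hdk]; exact hub
    exact ⟨j, hjlt, hPj, lt_of_le_of_ne hle hne2⟩
  have hIsub : ∀ j, j < k → ∀ u ∈ Ioo (d j) (d (j+1)),
      u ∈ Icc 0 b \ (d '' {i : ℕ | 0 < i ∧ i < k}) := by
    intro j hj u hu
    obtain ⟨h0u, hub⟩ := hmemI j hj u hu
    refine ⟨⟨h0u.le, hub.le⟩, ?_⟩
    rintro ⟨i, ⟨hi0, hik⟩, rfl⟩
    have h1 : j < i := by
      by_contra hcon
      have hd' : d i ≤ d j := hdle i j (not_lt.mp hcon) hj.le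
      linarith [hu.1]
    have h2 : i < j+1 := by
      by_contra hcon
      have hd' : d (j+1) ≤ d i := hdle (j+1) i (not_lt.mp hcon) hik.le
      linarith [hu.2]
    omega
  have hEleG : ∀ j, j < k → ∀ u ∈ Ioo (d j) (d (j+1)), E j ≤ G u ∧ G u ≤ F j := by
    intro j hj u hu
    rw [hGeqI j hj u hu, hEdef, hFdef]
    exact ⟨add_le_add_left ((hAB j hj).1.2.2 u hu) _,
      add_le_add_left ((hAB j hj).2.2.2 u hu) _⟩
  have hEF' : ∀ j, j < k → E j ≤ F j := by
    intro j hj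
    have hmid : (d j + d (j+1))/2 ∈ Ioo (d j) (d (j+1)) :=
      ⟨by linarith [hII j hj], by linarith [hII j hj]⟩
    obtain ⟨h1, h2⟩ := hEleG j hj ((d j + d (j+1))/2) hmid
    exact le_trans h1 h2
  have hchain : ∀ i n, i + 1 + n ≤ k → F i ≤ E (i+1+n) := by
    intro i n
    induction n with
    | zero => intro _; exact (hFE i).1
    | succ m ih =>
      intro hle
      have h1 : i+1+m < k := by omega
      have h2 := ih (by omega)
      have h3 := hEF' (i+1+m) h1
      have h4 := (hFE (i+1+m)).1
      have hidx : i+1+(m+1) = (i+1+m)+1 := by omega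
      rw [hidx]
      linarith
  have hcross : ∀ i j, i < j → j ≤ k → F i ≤ E j := by
    intro i j hij hjk
    have hidx : j = i + 1 + (j - (i+1)) := by omega
    rw [hidx]
    exact hchain i _ (by omega)
  have hG0E : ∀ j, j < k → G0 ≤ E j := by
    intro j hj
    rcases Nat.eq_zero_or_pos j with h0 | h0
    · rw [h0]; exact hE0.1
    · have h1 : G0 ≤ E 0 := hE0.1
      have h2 : E 0 ≤ F 0 := hEF' 0 (by omega)
      have h3 : F 0 ≤ E j := hcross 0 j h0 hj.le
      linarith
  have hFGb : ∀ j, j < k → F j ≤ Gb := by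
    intro j hj
    have hk1 : k - 1 < k := by omega
    have h2 : F (k-1) ≤ Gb := hGbmem.1
    rcases Nat.lt_or_ge j (k-1) with h' | h'
    · have h3 := hcross j (k-1) h' (by omega)
      have h4 := hEF' (k-1) hk1
      linarith
    · have heq : j = k - 1 := by omega
      rw [heq]; exact h2
  have hGcont : ∀ j, j < k → ContinuousOn G (Ioo (d j) (d (j+1))) := by
    intro j hj
    exact (((hL j hj).1).add continuousOn_const).congr (fun u hu => hGeqI j hj u hu)
  have hGlift : ∀ u ∈ Icc 0 b \ (d '' {i : ℕ | 0 < i ∧ i < k}),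
      ((G u : ℝ) : AddCircle (1:ℝ)) = h u := by
    intro u hu
    rcases hcover u hu with rfl | rfl | ⟨j, hj, huj⟩
    · rw [hG0eq]; exact hG0coe
    · rw [hGbeq]; exact hGbcoe
    · rw [hGeqI j hj u huj, AddCircle.coe_add, hcπ, add_zero, (hL j hj).2.2 u huj]
  have hGtendR : ∀ j, j < k → Tendsto G (𝓝[>] (d j)) (𝓝 (E j)) := by
    intro j hj
    have h1 : Tendsto (fun u => L j u + c j) (𝓝[>] (d j)) (𝓝 (A j + c j)) :=
      ((hAB j hj).1.1).add_const (c j)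
    have h2 : E j = A j + c j := by rw [hEdef]
    rw [h2]
    refine h1.congr' ?_
    filter_upwards [Ioo_mem_nhdsGT_of_mem ⟨le_rfl, hII j hj⟩] with u hu
    exact (hGeqI j hj u hu).symm
  have hGtendL : ∀ j, j < k → Tendsto G (𝓝[<] (d (j+1))) (𝓝 (F j)) := by
    intro j hj
    have h1 : Tendsto (fun u => L j u + c j) (𝓝[<] (d (j+1))) (𝓝 (B j + c j)) :=
      ((hAB j hj).2.1).add_const (c j)
    have h2 : F j = B j + c j := by rw [hFdef]
    rw [h2]
    refine h1.congr' ?_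
    filter_upwards [Ioo_mem_nhdsLT_of_mem ⟨hII j hj, le_rfl⟩] with u hu
    exact (hGeqI j hj u hu).symm
  have hGmono : MonotoneOn G (Icc 0 b \ (d '' {i : ℕ | 0 < i ∧ i < k})) := by
    intro u hu v hv huv
    rcases hcover u hu with rfl | rfl | ⟨i, hi, hui⟩
    · rcases hcover v hv with rfl | rfl | ⟨j, hj, hvj⟩
      · exact le_rfl
      · rw [hG0eq, hGbeq]
        have h1 := hE0.1
        have h2 := hEF' 0 (by omega)
        have h3 := hFGb 0 (by omega)
        linarith
      · rw [hG0eq]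
        exact le_trans (hG0E j hj) (hEleG j hj v hvj).1
    · have hvb : v = u := le_antisymm hv.1.2 huv
      rw [hvb]
    · rcases hcover v hv with rfl | rfl | ⟨j, hj, hvj⟩
      · exfalso
        have := (hmemI i hi u hui).1
        linarith
      · rw [hGbeq]
        exact le_trans (hEleG i hi u hui).2 (hFGb i hi)
      · by_cases hij : i = j
        · subst hij
          rw [hGeqI i hi u hui, hGeqI i hi v hvj]
          exact add_le_add_left ((hL i hi).2.1 hui hvj huv) _
        · have hij' : i < j := by
            rcases Nat.lt_or_ge i j with h' | h'
            · exact h'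
            · exfalso
              have hji : j < i := lt_of_le_of_ne h' (Ne.symm hij)
              have hd' : d (j+1) ≤ d i := hdle (j+1) i hji hi.le
              linarith [hui.1, hvj.2]
          calc G u ≤ F i := (hEleG i hi u hui).2
            _ ≤ E j := hcross i j hij' hj.le
            _ ≤ G v := (hEleG j hj v hvj).1
  have hGjump : ∀ j : ℕ, 0 < j → j < k → ∃ Gm Gp : ℝ,
      Tendsto G (𝓝[<] (d j)) (𝓝 Gm) ∧ Tendsto G (𝓝[>] (d j)) (𝓝 Gp) ∧
      Gm < Gp ∧ Gp < Gm + 1 := by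
    intro j h0j hjk
    have hj1 : j - 1 + 1 = j := Nat.succ_pred_eq_of_pos h0j
    have hj1k : j - 1 < k := by omega
    have htL := hGtendL (j-1) hj1k
    rw [hj1] at htL
    have hmem := hFE (j-1)
    rw [hj1] at hmem
    refine ⟨F (j-1), E j, htL, hGtendR j hjk, ?_, hmem.2⟩
    refine lt_of_le_of_ne hmem.1 ?_
    intro heq
    apply hne j h0j hjk
    have hf := hFπ (j-1) hj1k
    rw [hj1] at hf
    rw [← hf, heq, hEπ j hjk]
  have hGat0 : ∃ Gp : ℝ, Tendsto G (𝓝[>] (0:ℝ)) (𝓝 Gp) ∧ G 0 ≤ Gp ∧ Gp < G 0 + 1 := by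
    have h0k : 0 < k := by omega
    have := hGtendR 0 h0k
    rw [hd0] at this
    exact ⟨E 0, this, by rw [hG0eq]; exact hE0.1, by rw [hG0eq]; exact hE0.2⟩
  have hGatb : ∃ Gm : ℝ, Tendsto G (𝓝[<] b) (𝓝 Gm) ∧ Gm ≤ G b ∧ G b < Gm + 1 := by
    have hk1 : k - 1 < k := by omega
    have := hGtendL (k-1) hk1
    rw [show k-1+1 = k from by omega, hdk] at this
    exact ⟨F (k-1), this, by rw [hGbeq]; exact hGbmem.1, by rw [hGbeq]; exact hGbmem.2⟩
  refine ⟨G, ⟨hGcont, hGlift, hGmono, hGjump, hGat0, hGatb,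
    by rw [hG0eq]; exact hG0mem⟩, ?_⟩
  intro G' hG' u hu
  obtain ⟨hc1, hc2, hc3, hc4, hc5, hc6, hc7⟩ := hG'
  have h0S : (0:ℝ) ∈ Icc 0 b \ (d '' {i : ℕ | 0 < i ∧ i < k}) := by
    refine ⟨⟨le_rfl, hb.le⟩, ?_⟩
    rintro ⟨i, ⟨hi0, hik⟩, heq⟩
    have hcon := hdmono 0 i hi0 hik.le
    rw [hd0, heq] at hcon
    exact lt_irrefl 0 hcon
  have hbS : b ∈ Icc 0 b \ (d '' {i : ℕ | 0 < i ∧ i < k}) := by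
    refine ⟨⟨hb.le, le_rfl⟩, ?_⟩
    rintro ⟨i, ⟨hi0, hik⟩, heq⟩
    have hcon := hdmono i k hik le_rfl
    rw [heq, hdk] at hcon
    exact lt_irrefl b hcon
  have hG'0eq : G' 0 = G 0 := by
    have m1 : G' 0 ∈ Ico (0:ℝ) (0 + 1) := by rw [zero_add]; exact hc7
    have m2 : G 0 ∈ Ico (0:ℝ) (0 + 1) := by rw [zero_add, hG0eq]; exact hG0mem
    refine (AddCircle.coe_eq_coe_iff_of_mem_Ico m1 m2).mp ?_
    rw [hc2 0 h0S, hGlift 0 h0S]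
  have hmidmem : ∀ j, j < k → (d j + d (j+1))/2 ∈ Ioo (d j) (d (j+1)) := by
    intro j hj
    exact ⟨by linarith [hII j hj], by linarith [hII j hj]⟩
  set m : ℕ → ℝ := fun j => G' ((d j + d (j+1))/2) - G ((d j + d (j+1))/2) with hmdef
  have hDconst : ∀ j, j < k → ∀ w ∈ Ioo (d j) (d (j+1)), G' w - G w = m j := by
    intro j hj w hw
    have hcont : ContinuousOn (fun w => G' w - G w) (Ioo (d j) (d (j+1))) :=
      (hc1 j hj).sub (hGcont j hj)
    have hint : ∀ w ∈ Ioo (d j) (d (j+1)),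
        (((G' w - G w : ℝ)) : AddCircle (1:ℝ)) = 0 := by
      intro w hw
      rw [AddCircle.coe_sub, hc2 w (hIsub j hj w hw), hGlift w (hIsub j hj w hw), sub_self]
    have hcc := constant_of_int_valued isPreconnected_Ioo hcont hint w hw _ (hmidmem j hj)
    rw [hmdef]
    exact hcc
  have hmπ : ∀ j, j < k → ((m j : ℝ) : AddCircle (1:ℝ)) = 0 := by
    intro j hj
    rw [hmdef]
    simp only
    rw [AddCircle.coe_sub, hc2 _ (hIsub j hj _ (hmidmem j hj)),
      hGlift _ (hIsub j hj _ (hmidmem j hj)), sub_self]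
  have hG'tendR : ∀ j, j < k → Tendsto G' (𝓝[>] (d j)) (𝓝 (E j + m j)) := by
    intro j hj
    refine ((hGtendR j hj).add_const (m j)).congr' ?_
    filter_upwards [Ioo_mem_nhdsGT_of_mem ⟨le_rfl, hII j hj⟩] with w hw
    have hcc := hDconst j hj w hw
    linarith
  have hG'tendL : ∀ j, j < k → Tendsto G' (𝓝[<] (d (j+1))) (𝓝 (F j + m j)) := by
    intro j hj
    refine ((hGtendL j hj).add_const (m j)).congr' ?_
    filter_upwards [Ioo_mem_nhdsLT_of_mem ⟨hII j hj, le_rfl⟩] with w hw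
    have hcc := hDconst j hj w hw
    linarith
  have hm0 : ∀ j, j < k → m j = 0 := by
    intro j
    induction j with
    | zero =>
      intro hj
      obtain ⟨Gp', hGp't, hGp'l, hGp'u⟩ := hc5
      have ht := hG'tendR 0 hj
      rw [hd0] at ht
      have hu' : Gp' = E 0 + m 0 := tendsto_nhds_unique hGp't ht
      have hmm1 : E 0 + m 0 ∈ Ico G0 (G0 + 1) := by
        rw [← hu']
        constructor
        · calc G0 = G 0 := hG0eq.symm
            _ = G' 0 := hG'0eq.symm
            _ ≤ Gp' := hGp'l
        · calc Gp' < G' 0 + 1 := hGp'u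
            _ = G 0 + 1 := by rw [hG'0eq]
            _ = G0 + 1 := by rw [hG0eq]
      have hco : ((E 0 + m 0 : ℝ) : AddCircle (1:ℝ)) = ((E 0 : ℝ) : AddCircle (1:ℝ)) := by
        rw [AddCircle.coe_add, hmπ 0 hj, add_zero]
      have hfin := (AddCircle.coe_eq_coe_iff_of_mem_Ico hmm1 hE0).mp hco
      linarith
    | succ n ih =>
      intro hj
      have hnk : n < k := by omega
      have hmn := ih hnk
      obtain ⟨Gm', Gp', hGm't, hGp't, hlt', hlt1'⟩ := hc4 (n+1) (Nat.succ_pos n) hj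
      have htL := hG'tendL n hnk
      rw [hmn, add_zero] at htL
      have e1 : Gm' = F n := tendsto_nhds_unique hGm't htL
      have e2 : Gp' = E (n+1) + m (n+1) := tendsto_nhds_unique hGp't (hG'tendR (n+1) hj)
      have hmm1 : E (n+1) + m (n+1) ∈ Ico (F n) (F n + 1) := by
        rw [← e2]
        constructor
        · rw [← e1]; exact hlt'.le
        · rw [← e1]; exact hlt1'
      have hco : ((E (n+1) + m (n+1) : ℝ) : AddCircle (1:ℝ))
          = ((E (n+1) : ℝ) : AddCircle (1:ℝ)) := by
        rw [AddCircle.coe_add, hmπ (n+1) hj, add_zero]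
      have hfin := (AddCircle.coe_eq_coe_iff_of_mem_Ico hmm1 (hFE n)).mp hco
      linarith
  rcases hcover u hu with rfl | rfl | ⟨j, hj, huj⟩
  · exact hG'0eq
  · obtain ⟨Gm', hGm't, hl, hr⟩ := hc6
    have hk1 : k - 1 < k := by omega
    have htL := hG'tendL (k-1) hk1
    rw [hm0 (k-1) hk1, add_zero, show k-1+1 = k from by omega, hdk] at htL
    have e1 : Gm' = F (k-1) := tendsto_nhds_unique hGm't htL
    have hmm1 : G' u ∈ Ico (F (k-1)) (F (k-1) + 1) := by rw [← e1]; exact ⟨hl, hr⟩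
    have hmm2 : G u ∈ Ico (F (k-1)) (F (k-1) + 1) := by rw [hGbeq]; exact hGbmem
    refine (AddCircle.coe_eq_coe_iff_of_mem_Ico hmm1 hmm2).mp ?_
    rw [hc2 _ hbS, hGlift _ hbS]
  · have hcc := hDconst j hj u huj
    rw [hm0 j hj] at hcc
    linarith
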